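/- Let X, Y be Banach spaces, X complete (automatic), and f : X → Y a C¹ map such that df(x) is a linear isomorphism for every x and ‖df(x)⁻¹‖ ≤ β for all x ∈ X and some β > 0 (Hadamard–Lévy condition with constant bound). If q : [0, ε) → X is a path with f(q(t)) = p(t) for a C¹ path p : [0,1] → Y, then q is Lipschitz with constant β·sup‖p′‖, and hence extends continuously to [0, ε]. -/

import Mathlib

open Topology Filter


/-- Under the Hadamard–Lévy bound `‖df(x)⁻¹‖ ≤ β`, a lift `q` on `[0, ε)` of a `C¹`
path `p` with `‖p′‖ ≤ M` is Lipschitz with constant `β·M`, hence extends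
continuously to `[0, ε]`. -/
theorem stmt11 {X Y : Type*} [NormedAddCommGroup X] [NormedSpace ℝ X] [CompleteSpace X]
    [NormedAddCommGroup Y] [NormedSpace ℝ Y] [CompleteSpace Y]
    (f : X → Y) (f' : X → X ≃L[ℝ] Y)
    (hf : ∀ x, HasFDerivAt f (f' x : X →L[ℝ] Y) x)
    {β : ℝ} (hβ : 0 < β) (hbound : ∀ x, ‖((f' x).symm : Y →L[ℝ] X)‖ ≤ β)
    (p p' : ℝ → Y) (hp : ∀ t ∈ Set.Icc (0:ℝ) 1, HasDerivAt p (p' t) t)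
    {M : ℝ} (hM : ∀ t ∈ Set.Icc (0:ℝ) 1, ‖p' t‖ ≤ M)
    {ε : ℝ} (hε : 0 < ε) (hε1 : ε ≤ 1)
    (q : ℝ → X)
    (hq : ∀ t ∈ Set.Ico (0:ℝ) ε, HasDerivAt q ((f' (q t)).symm (p' t)) t)
    (hlift : ∀ t ∈ Set.Ico (0:ℝ) ε, f (q t) = p t) :
    LipschitzOnWith (Real.toNNReal (β * M)) q (Set.Ico 0 ε) ∧
      ∃ qbar : ℝ → X, ContinuousOn qbar (Set.Icc 0 ε) ∧
        ∀ t ∈ Set.Ico (0:ℝ) ε, qbar t = q t := by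
  have hM0 : 0 ≤ M := le_trans (norm_nonneg _) (hM 0 ⟨le_refl _, zero_le_one⟩)
  have hlip : LipschitzOnWith (Real.toNNReal (β * M)) q (Set.Ico 0 ε) := by
    apply (convex_Ico (0:ℝ) ε).lipschitzOnWith_of_nnnorm_hasDerivWithin_le
      (f' := fun t => (f' (q t)).symm (p' t))
      (fun t ht => (hq t ht).hasDerivWithinAt)
    intro t ht
    have h1 : ‖(f' (q t)).symm (p' t)‖ ≤ β * M := by
      calc ‖(f' (q t)).symm (p' t)‖ ≤ ‖((f' (q t)).symm : Y →L[ℝ] X)‖ * ‖p' t‖ :=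
            ((f' (q t)).symm : Y →L[ℝ] X).le_opNorm _
        _ ≤ β * M := by
            apply mul_le_mul (hbound _) (hM t ⟨ht.1, le_trans ht.2.le hε1⟩)
              (norm_nonneg _) hβ.le
    rw [Real.le_toNNReal_iff_coe_le (mul_nonneg hβ.le hM0)]
    simpa using h1
  refine ⟨hlip, extendFrom (Set.Ico 0 ε) q, ?_, ?_⟩
  · apply continuousOn_extendFrom (B := Set.Icc 0 ε)
    · rw [closure_Ico hε.ne]
    · intro x hx
      have hxcl : x ∈ closure (Set.Ico 0 ε) := by rwa [closure_Ico hε.ne]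
      have hne : (𝓝[Set.Ico 0 ε] x).NeBot := mem_closure_iff_nhdsWithin_neBot.1 hxcl
      have hcauchy : Cauchy (Filter.map q (𝓝[Set.Ico 0 ε] x)) := by
        rw [Metric.cauchy_iff]
        refine ⟨Filter.map_neBot, fun δ hδ => ?_⟩
        set K : ℝ := β * M
        have hK0 : 0 ≤ K := mul_nonneg hβ.le hM0
        set r : ℝ := δ / (2 * (K + 1)) with hr
        have hr0 : 0 < r := by positivity
        refine ⟨q '' (Set.Ico 0 ε ∩ Metric.ball x r), ?_, ?_⟩
        · rw [Filter.mem_map]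
          filter_upwards [self_mem_nhdsWithin,
            nhdsWithin_le_nhds (Metric.ball_mem_nhds x hr0)] with a ha hb
          exact ⟨a, ⟨ha, hb⟩, rfl⟩
        · rintro _ ⟨a, ⟨ha, ha'⟩, rfl⟩ _ ⟨b, ⟨hb, hb'⟩, rfl⟩
          have := hlip.dist_le_mul a ha b hb
          have hab : dist a b < 2 * r :=
            lt_of_le_of_lt (dist_triangle a x b)
              (by rw [two_mul]; exact add_lt_add (Metric.mem_ball.1 ha') (Metric.mem_ball'.1 hb'))
          calc dist (q a) (q b) ≤ (Real.toNNReal K : ℝ) * dist a b := this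
            _ ≤ K * dist a b := by
                apply mul_le_mul_of_nonneg_right _ dist_nonneg
                exact Real.coe_toNNReal K hK0 |>.le
            _ ≤ (K + 1) * dist a b := by
                apply mul_le_mul_of_nonneg_right (by linarith) dist_nonneg
            _ < (K + 1) * (2 * r) := by
                apply mul_lt_mul_of_pos_left hab (by linarith)
            _ = δ := by rw [hr]; field_simp
      obtain ⟨y, hy⟩ := CompleteSpace.complete hcauchy
      exact ⟨y, hy⟩
  · exact fun t ht => extendFrom_extends hlip.continuousOn t ht
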